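/- Theorem (via van der Waerden): Let k ≥ 3 and r ≥ 1 be integers, f : ℝ⁺ → ℝ twice differentiable, R : ℕ → ℝ with M₁ ≤ R(n) ≤ M₂ for all n, and let a : ℕ → ℕ be strictly increasing with a(n) = f(n) + R(n) for all n. If limsup_{x→∞} |f''(x)| < ((k-1)/(W(r,k)-1))² · (1/(k-2) - 2(M₂-M₁)/r), then there exist positive integers d, e such that {a(e + dj)}_{j=0}^{k-1} is an arithmetic progression of length k; in particular the graph of a contains an arithmetic progression of length k. -/

import Mathlib

/-- `vdwProp r k N` : every `r`-coloring of any `N` consecutive integers contains a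
monochromatic arithmetic progression of length `k`. -/
def vdwProp (r k N : ℕ) : Prop :=
  ∀ χ : ℕ → Fin r, ∀ n₀ : ℕ, ∃ e d : ℕ, 0 < d ∧ n₀ ≤ e ∧ e + (k - 1) * d < n₀ + N ∧
    ∀ j, j < k → χ (e + j * d) = χ e

set_option maxHeartbeats 1000000 in
theorem stmt_8 (k r W : ℕ) (hk : 3 ≤ k) (hr : 1 ≤ r)
    (hW : IsLeast {N | vdwProp r k N} W)
    (f f' f'' : ℝ → ℝ)
    (hf : ∀ x : ℝ, 0 < x → HasDerivAt f (f' x) x)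
    (hf' : ∀ x : ℝ, 0 < x → HasDerivAt f' (f'' x) x)
    (M₁ M₂ : ℝ) (R : ℕ → ℝ) (hR : ∀ n : ℕ, 1 ≤ n → M₁ ≤ R n ∧ R n ≤ M₂)
    (a : ℕ → ℕ) (ha : StrictMono a)
    (haf : ∀ n : ℕ, 1 ≤ n → (a n : ℝ) = f n + R n)
    (hlim : ∃ B : ℝ,
      B < (((k : ℝ) - 1) / ((W : ℝ) - 1)) ^ 2 *
          (1 / ((k : ℝ) - 2) - 2 * (M₂ - M₁) / (r : ℝ)) ∧
      ∀ᶠ x in Filter.atTop, |f'' x| ≤ B) :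
    ∃ e d : ℕ, 0 < e ∧ 0 < d ∧ ∃ D : ℕ, 0 < D ∧
      ∀ j, j + 1 < k → a (e + (j + 1) * d) = a (e + j * d) + D := by
  obtain ⟨B, hB, hBev⟩ := hlim
  obtain ⟨X₀, hX₀⟩ := Filter.eventually_atTop.mp hBev
  set c : ℝ := max X₀ 1 with hc
  have hc1 : (1:ℝ) ≤ c := le_max_right _ _
  have hc0 : (0:ℝ) < c := by linarith
  have hBnn : 0 ≤ B := le_trans (abs_nonneg _) (hX₀ c (le_max_left _ _))
  -- W ≥ 2
  have hW2 : 2 ≤ W := by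
    by_contra h
    push_neg at h
    obtain ⟨e, d, hd, he, hlt, -⟩ := hW.1 (fun _ => ⟨0, hr⟩) 0
    have : 2 * 1 ≤ (k - 1) * d := Nat.mul_le_mul (by omega) hd
    omega
  -- apply van der Waerden
  obtain ⟨e, d, hd, he, hlt, hcol⟩ :=
    hW.1 (fun n => ⟨a n % r, Nat.mod_lt _ hr⟩) (⌈c⌉₊ + 1)
  have he1 : 1 ≤ e := le_trans (by omega) he
  have hec : c ≤ (e : ℝ) := by
    calc c ≤ (⌈c⌉₊ : ℝ) := Nat.le_ceil c
    _ ≤ (e : ℝ) := by exact_mod_cast le_trans (Nat.le_succ _) he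
  -- d bound
  have hdW : (k - 1) * d ≤ W - 1 := by omega
  have hdWR : ((k : ℝ) - 1) * d ≤ (W : ℝ) - 1 := by
    have h := (Nat.cast_le (α := ℝ)).2 hdW
    rw [Nat.cast_mul, Nat.cast_sub (by omega : 1 ≤ k), Nat.cast_sub (by omega : 1 ≤ W)] at h
    simpa using h
  set m : ℝ := M₂ - M₁ with hm
  have hm0 : 0 ≤ m := by
    have h1 := (hR 1 le_rfl).1
    have h2 := (hR 1 le_rfl).2
    simp only [hm]; linarith
  have hrR : (1:ℝ) ≤ (r:ℝ) := by exact_mod_cast hr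
  have hkR : (3:ℝ) ≤ (k:ℝ) := by exact_mod_cast hk
  have hWR : (2:ℝ) ≤ (W:ℝ) := by exact_mod_cast hW2
  have hdB : (d:ℝ)^2 * B < 1 / ((k:ℝ) - 2) - 2 * m / r := by
    have hdq : (d:ℝ) ≤ ((W:ℝ)-1)/((k:ℝ)-1) := by
      rw [le_div_iff₀ (by linarith)]
      nlinarith [hdWR]
    have hd0 : (0:ℝ) ≤ (d:ℝ) := Nat.cast_nonneg d
    have hd2 : (d:ℝ)^2 ≤ (((W:ℝ)-1)/((k:ℝ)-1))^2 := by nlinarith [hdq, hd0]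
    calc (d:ℝ)^2*B ≤ (((W:ℝ)-1)/((k:ℝ)-1))^2 * B := mul_le_mul_of_nonneg_right hd2 hBnn
      _ < (((W:ℝ)-1)/((k:ℝ)-1))^2 *
          ((((k:ℝ)-1)/((W:ℝ)-1))^2 * (1/((k:ℝ)-2) - 2*m/r)) := by
          apply mul_lt_mul_of_pos_left hB
          have : (0:ℝ) < ((W:ℝ)-1)/((k:ℝ)-1) := by
            apply div_pos <;> linarith
          positivity
      _ = 1/((k:ℝ)-2) - 2*m/r := by
          rw [← mul_assoc, div_pow, div_pow, div_mul_div_comm]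
          rw [show (((W:ℝ)-1)^2*((k:ℝ)-1)^2) = (((k:ℝ)-1)^2*((W:ℝ)-1)^2) by ring]
          rw [div_self (ne_of_gt (mul_pos (by nlinarith : (0:ℝ) < ((k:ℝ)-1)^2)
            (by nlinarith : (0:ℝ) < ((W:ℝ)-1)^2))), one_mul]
  have hdB' : (d:ℝ)^2*B*(((k:ℝ)-2)*r) < r - 2*m*((k:ℝ)-2) := by
    have hpos : (0:ℝ) < ((k:ℝ)-2)*r := by nlinarith
    have h := mul_lt_mul_of_pos_right hdB hpos
    have he2 : (1/((k:ℝ)-2) - 2*m/r) * (((k:ℝ)-2)*r) = r - 2*m*((k:ℝ)-2) := by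
      have hk2 : ((k:ℝ)-2) ≠ 0 := by linarith
      have hr0 : (r:ℝ) ≠ 0 := by linarith
      field_simp
    rw [he2] at h
    exact h
  have key : ((k:ℝ)-2) * ((d:ℝ)^2*B) + 2*m < r := by
    have h1 : (0:ℝ) ≤ (d:ℝ)^2*B*((k:ℝ)-2) :=
      mul_nonneg (mul_nonneg (sq_nonneg _) hBnn) (by linarith)
    nlinarith [hdB', mul_nonneg h1 (by linarith : (0:ℝ) ≤ (r:ℝ)-1),
      mul_nonneg hm0 (by linarith : (0:ℝ) ≤ (k:ℝ)-3)]
  -- MVT setup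
  have hconv : Convex ℝ (Set.Ici c) := convex_Ici c
  have hmem_pos : ∀ x ∈ Set.Ici c, (0:ℝ) < x := fun x hx => lt_of_lt_of_le hc0 hx
  have hd0' : (0:ℝ) ≤ (d:ℝ) := Nat.cast_nonneg d
  have hf'lip : ∀ x ∈ Set.Ici c, ∀ y ∈ Set.Ici c, |f' y - f' x| ≤ B * |y - x| := by
    intro x hx y hy
    have h := Convex.norm_image_sub_le_of_norm_hasDerivWithin_le (f := f') (f' := f'')
      (s := Set.Ici c) (C := B)
      (fun z hz => (hf' z (hmem_pos z hz)).hasDerivWithinAt)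
      (fun z hz => by
        rw [Real.norm_eq_abs]
        exact hX₀ z (le_trans (le_max_left _ _) hz)) hconv hx hy
    simpa [Real.norm_eq_abs] using h
  have hφ : ∀ x ∈ Set.Ici c,
      HasDerivWithinAt (fun y => f (y + d) - f y) (f' (x + d) - f' x) (Set.Ici c) x := by
    intro x hx
    have hx0 := hmem_pos x hx
    have h1 : HasDerivAt (fun y : ℝ => f (y + d)) (f' (x + d)) x := by
      have := (hf (x + d) (by linarith)).comp x ((hasDerivAt_id x).add_const (d:ℝ))
      rw [mul_one] at this
      exact this
    exact (h1.sub (hf x hx0)).hasDerivWithinAt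
  have hφlip : ∀ x ∈ Set.Ici c, ∀ y ∈ Set.Ici c,
      |(f (y + d) - f y) - (f (x + d) - f x)| ≤ B * d * |y - x| := by
    intro x hx y hy
    have h := Convex.norm_image_sub_le_of_norm_hasDerivWithin_le hφ
      (fun z hz => by
        rw [Real.norm_eq_abs]
        have hzd : z + (d:ℝ) ∈ Set.Ici c := Set.mem_Ici.2 (by
          have := Set.mem_Ici.1 hz; linarith)
        calc |f' (z + d) - f' z| ≤ B * |z + (d:ℝ) - z| := hf'lip z hz _ hzd
          _ = B * d := by rw [add_sub_cancel_left, abs_of_nonneg hd0']) hconv hx hy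
    simpa [Real.norm_eq_abs] using h
  -- conclusion
  refine ⟨e, d, by omega, hd, a (e + d) - a e, ?_, ?_⟩
  · have := ha (show e < e + d by omega)
    omega
  intro j hj
  have hjk : (j:ℝ) ≤ (k:ℝ) - 2 := by
    have : (j:ℝ) + 2 ≤ (k:ℝ) := by exact_mod_cast (show j + 2 ≤ k by omega)
    linarith
  have hes : (e:ℝ) ∈ Set.Ici c := Set.mem_Ici.2 hec
  have hn0s : ((e + j*d : ℕ) : ℝ) ∈ Set.Ici c := Set.mem_Ici.2
    (le_trans hec (by exact_mod_cast Nat.le_add_right e (j*d)))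
  -- modular arithmetic
  have hcol' : ∀ i, i < k → a (e + i * d) % r = a e % r := by
    intro i hi
    have := hcol i hi
    simpa [Fin.ext_iff] using this
  have hd1 : (r:ℤ) ∣ ((a e : ℤ) - a (e + (j+1)*d)) := by
    have h := hcol' (j+1) (by omega)
    have h' : ((a (e + (j+1)*d)) : ℤ) % r = (a e : ℤ) % r := by exact_mod_cast h
    exact Int.ModEq.dvd h'
  have hd2 : (r:ℤ) ∣ ((a e : ℤ) - a (e + j*d)) := by
    have h := hcol' j (by omega)
    have h' : ((a (e + j*d)) : ℤ) % r = (a e : ℤ) % r := by exact_mod_cast h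
    exact Int.ModEq.dvd h'
  have hd3 : (r:ℤ) ∣ ((a e : ℤ) - a (e + d)) := by
    have h := hcol' 1 (by omega)
    rw [one_mul] at h
    have h' : ((a (e + d)) : ℤ) % r = (a e : ℤ) % r := by exact_mod_cast h
    exact Int.ModEq.dvd h'
  have hdvd : (r:ℤ) ∣ ((a (e + (j+1)*d) : ℤ) - a (e + j*d) - ((a (e + d) : ℤ) - a e)) := by
    have := dvd_add (dvd_sub hd2 hd1) hd3
    have heq : (a e : ℤ) - a (e + j*d) - ((a e : ℤ) - a (e + (j+1)*d)) + ((a e:ℤ) - a (e+d))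
        = (a (e + (j+1)*d) : ℤ) - a (e + j*d) - ((a (e + d) : ℤ) - a e) := by ring
    rwa [heq] at this
  -- size bound
  have hcast1 : f (((e + j*d : ℕ):ℝ) + d) = f ((e + (j+1)*d : ℕ):ℝ) := by
    congr 1
    push_cast
    ring
  have hcast0 : f ((e:ℝ) + d) = f ((e + d : ℕ):ℝ) := by
    congr 1
    push_cast
    ring
  have E1 : (a (e+(j+1)*d) : ℝ) - a (e+j*d)
      = (f (((e+j*d : ℕ):ℝ) + d) - f ((e+j*d : ℕ):ℝ)) + (R (e+(j+1)*d) - R (e+j*d)) := by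
    rw [haf (e+(j+1)*d) (by omega), haf (e+j*d) (by omega), hcast1]
    ring
  have E0 : (a (e+d) : ℝ) - a e
      = (f ((e:ℝ) + d) - f (e:ℝ)) + (R (e+d) - R e) := by
    rw [haf (e+d) (by omega), haf e he1, hcast0]
    ring
  have hφb := hφlip (e:ℝ) hes ((e+j*d : ℕ):ℝ) hn0s
  have habs : |((e+j*d : ℕ):ℝ) - (e:ℝ)| = (j:ℝ)*d := by
    have h1 : ((e+j*d : ℕ):ℝ) - (e:ℝ) = (j:ℝ)*d := by push_cast; ring
    rw [h1, abs_of_nonneg (by positivity)]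
  rw [habs] at hφb
  have hφb2 : |(f (((e+j*d : ℕ):ℝ) + d) - f ((e+j*d : ℕ):ℝ)) - (f ((e:ℝ) + d) - f (e:ℝ))|
      ≤ ((k:ℝ)-2) * ((d:ℝ)^2*B) := by
    refine le_trans hφb ?_
    nlinarith [mul_le_mul_of_nonneg_right hjk (mul_nonneg (sq_nonneg (d:ℝ)) hBnn)]
  obtain ⟨hR1a, hR1b⟩ := hR (e+(j+1)*d) (by omega)
  obtain ⟨hR2a, hR2b⟩ := hR (e+j*d) (by omega)
  obtain ⟨hR3a, hR3b⟩ := hR (e+d) (by omega)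
  obtain ⟨hR4a, hR4b⟩ := hR e he1
  have hZreal : |((a (e+(j+1)*d) : ℝ) - a (e+j*d) - ((a (e+d) : ℝ) - a e))| < r := by
    rw [E1, E0, abs_lt]
    rw [abs_le] at hφb2
    constructor <;> nlinarith [hφb2.1, hφb2.2]
  have hZint : |(a (e+(j+1)*d) : ℤ) - a (e+j*d) - ((a (e+d) : ℤ) - a e)| < (r:ℤ) := by
    have h : ((|(a (e+(j+1)*d) : ℤ) - a (e+j*d) - ((a (e+d) : ℤ) - a e)| : ℤ) : ℝ) < (r:ℝ) := by
      rw [Int.cast_abs]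
      push_cast
      push_cast at hZreal
      exact hZreal
    exact_mod_cast h
  have hZ0 : (a (e+(j+1)*d) : ℤ) - a (e+j*d) - ((a (e+d) : ℤ) - a e) = 0 :=
    Int.eq_zero_of_abs_lt_dvd hdvd hZint
  have hle : a e ≤ a (e+d) := (ha.monotone (by omega))
  omega
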